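/- Let G be a dimension group, let n ≥ 1 be a natural number, and let a ∈ G. Then the set {x ∈ G : a ≤ n•x} is downward directed: for all x₀, x₁ ∈ G with a ≤ n•x₀ and a ≤ n•x₁ there exists x ∈ G with a ≤ n•x, x ≤ x₀ and x ≤ x₁. -/

import Mathlib

/-- In a dimension group `G` (a directed, unperforated interpolation group), for every
`n ≥ 1` and `a ∈ G`, the set `{x : a ≤ n • x}` is downward directed. -/
theorem stmt8 (G : Type*) [AddCommGroup G] [PartialOrder G]
    [CovariantClass G G (· + ·) (· ≤ ·)]
    (hdir : ∀ a b : G, ∃ c : G, a ≤ c ∧ b ≤ c)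
    (hunperf : ∀ n : ℕ, 1 ≤ n → ∀ x : G, 0 ≤ n • x → 0 ≤ x)
    (hinterp : ∀ a₀ a₁ b₀ b₁ : G, a₀ ≤ b₀ → a₀ ≤ b₁ → a₁ ≤ b₀ → a₁ ≤ b₁ →
      ∃ x : G, a₀ ≤ x ∧ a₁ ≤ x ∧ x ≤ b₀ ∧ x ≤ b₁)
    (n : ℕ) (hn : 1 ≤ n) (a x₀ x₁ : G) (h₀ : a ≤ n • x₀) (h₁ : a ≤ n • x₁) :
    ∃ x : G, a ≤ n • x ∧ x ≤ x₀ ∧ x ≤ x₁ := by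
  -- nsmul monotonicity
  have hmono : ∀ (m : ℕ) (u v : G), u ≤ v → m • u ≤ m • v := by
    intro m u v huv
    induction m with
    | zero => simp
    | succ m ih =>
      rw [succ_nsmul, succ_nsmul]
      exact add_le_add ih huv
  have hnonneg : ∀ (m : ℕ) (u : G), 0 ≤ u → 0 ≤ m • u := by
    intro m u hu
    simpa using hmono m 0 u hu
  -- cross inequalities via unperforation
  have hcross : ∀ k ≤ n, a ≤ k • x₀ + (n - k) • x₁ := by
    intro k hk
    obtain ⟨m, rfl⟩ : ∃ m, n = k + m := ⟨n - k, by omega⟩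
    have hsub : k + m - k = m := by omega
    rw [hsub]
    have key : (k + m) • (k • x₀ + m • x₁ - a)
        = k • ((k + m) • x₀ - a) + m • ((k + m) • x₁ - a) := by
      module
    have h0 : (0 : G) ≤ (k + m) • (k • x₀ + m • x₁ - a) := by
      rw [key]
      exact add_nonneg (hnonneg _ _ (sub_nonneg.2 h₀)) (hnonneg _ _ (sub_nonneg.2 h₁))
    exact sub_nonneg.1 (hunperf (k + m) hn _ h0)
  -- finite interpolation below x₀, x₁
  have hchain : ∀ (m : ℕ) (f : ℕ → G), (∀ k ≤ m, f k ≤ x₀) → (∀ k ≤ m, f k ≤ x₁) →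
      ∃ w, (∀ k ≤ m, f k ≤ w) ∧ w ≤ x₀ ∧ w ≤ x₁ := by
    intro m
    induction m with
    | zero =>
      intro f h0 h1
      obtain ⟨w, hw1, _, hw3, hw4⟩ :=
        hinterp (f 0) (f 0) x₀ x₁ (h0 0 le_rfl) (h1 0 le_rfl) (h0 0 le_rfl) (h1 0 le_rfl)
      refine ⟨w, ?_, hw3, hw4⟩
      intro k hk
      interval_cases k
      exact hw1
    | succ m ih =>
      intro f h0 h1
      obtain ⟨w, hw, hwx0, hwx1⟩ := ih f (fun k hk => h0 k (by omega)) (fun k hk => h1 k (by omega))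
      obtain ⟨w', hw1, hw2, hw3, hw4⟩ :=
        hinterp w (f (m + 1)) x₀ x₁ hwx0 hwx1 (h0 _ le_rfl) (h1 _ le_rfl)
      refine ⟨w', ?_, hw3, hw4⟩
      intro k hk
      rcases Nat.lt_or_ge k (m + 1) with h | h
      · exact (hw k (by omega)).trans hw1
      · have : k = m + 1 := by omega
        subst this
        exact hw2
  -- main invariant: after choosing j chain elements (summing to s, all ≤ the current top y)
  have Q : ∀ j, j ≤ n → ∃ y s : G, y ≤ x₀ ∧ y ≤ x₁ ∧ s ≤ j • y ∧
      ∀ k ≤ n - j, a ≤ s + (k • x₀ + (n - j - k) • x₁) := by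
    intro j
    induction j with
    | zero =>
      intro _
      obtain ⟨c, hc0, hc1⟩ := hdir (-x₀) (-x₁)
      have hneg : ∀ u v : G, -u ≤ v → -v ≤ u := by
        intro u v h
        have h2 := add_le_add_right h (u - v)
        calc -v = u - v + -u := by abel
          _ ≤ u - v + v := h2
          _ = u := by abel
      refine ⟨-c, 0, hneg _ _ hc0, hneg _ _ hc1, by simp, ?_⟩
      intro k hk
      simpa using hcross k (by omega)
    | succ j ih =>
      intro hj
      obtain ⟨y, s, hy0, hy1, hsy, hinv⟩ := ih (by omega)
      set r := n - (j + 1) with hr_def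
      obtain ⟨w, hw, hwx0, hwx1⟩ := hchain r (fun k => a - s - (k • x₀ + (r - k) • x₁))
          (by
            intro k hk
            have h := hinv (k + 1) (by omega)
            have hco : n - j - (k + 1) = r - k := by omega
            rw [hco] at h
            have h' : a ≤ s + (k • x₀ + (r - k) • x₁) + x₀ := by
              calc a ≤ s + ((k + 1) • x₀ + (r - k) • x₁) := h
                _ = s + (k • x₀ + (r - k) • x₁) + x₀ := by rw [succ_nsmul]; abel
            simp only [sub_le_iff_le_add]
            calc a ≤ s + (k • x₀ + (r - k) • x₁) + x₀ := h'
              _ = x₀ + (k • x₀ + (r - k) • x₁) + s := by abel)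
          (by
            intro k hk
            have h := hinv k (by omega)
            have hco : n - j - k = (r - k) + 1 := by omega
            rw [hco] at h
            have h' : a ≤ s + (k • x₀ + (r - k) • x₁) + x₁ := by
              calc a ≤ s + (k • x₀ + ((r - k) + 1) • x₁) := h
                _ = s + (k • x₀ + (r - k) • x₁) + x₁ := by rw [succ_nsmul]; abel
            simp only [sub_le_iff_le_add]
            calc a ≤ s + (k • x₀ + (r - k) • x₁) + x₁ := h'
              _ = x₁ + (k • x₀ + (r - k) • x₁) + s := by abel)
      obtain ⟨y', hyy', hwy', hy'0, hy'1⟩ := hinterp y w x₀ x₁ hy0 hy1 hwx0 hwx1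
      refine ⟨y', s + y', hy'0, hy'1, ?_, ?_⟩
      · calc s + y' ≤ j • y + y' := add_le_add_left hsy _
          _ ≤ j • y' + y' := add_le_add_left (hmono j y y' hyy') _
          _ = (j + 1) • y' := (succ_nsmul y' j).symm
      · intro k hk
        have h1' : a - s - (k • x₀ + (r - k) • x₁) ≤ y' := (hw k hk).trans hwy'
        have h3' : a - s ≤ y' + (k • x₀ + (r - k) • x₁) := sub_le_iff_le_add.mp h1'
        have h4' := add_le_add_right h3' s
        calc a = s + (a - s) := by abel
          _ ≤ s + (y' + (k • x₀ + (r - k) • x₁)) := h4'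
          _ = s + y' + (k • x₀ + (r - k) • x₁) := by abel
  obtain ⟨y, s, hy0, hy1, hsy, hinv⟩ := Q n le_rfl
  have has : a ≤ s := by
    have h := hinv 0 (by omega)
    simpa using h
  exact ⟨y, has.trans hsy, hy0, hy1⟩
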